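/- Let n ≥ 1 and let a₁ > a₂ > ⋯ > a_n be real numbers. Then, as s → ∞ over the reals, (1/log s)·log( ∏_{1 ≤ i < j ≤ n} |s^{−a_i} − s^{−a_j}| ) converges to −Σ_{j=1}^n (j−1)·a_j. -/

import Mathlib

open Filter
open Real


lemma aux_pair (b c : ℝ) (h : c < b) :
    Tendsto (fun s : ℝ => Real.log |s ^ (-b) - s ^ (-c)| / Real.log s) atTop (nhds (-c)) := by
  have h1 : Tendsto (fun s : ℝ => Real.log (1 - s ^ (c - b)) / Real.log s) atTop (nhds 0) := by
    have hnum : Tendsto (fun s : ℝ => Real.log (1 - s ^ (c - b))) atTop (nhds 0) := by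
      have h0 : Tendsto (fun s : ℝ => s ^ (c - b)) atTop (nhds 0) := by
        have := tendsto_rpow_neg_atTop (y := b - c) (by linarith)
        simpa [neg_sub] using this
      have h2 : Tendsto (fun s : ℝ => 1 - s ^ (c - b)) atTop (nhds 1) := by
        simpa using (tendsto_const_nhds (α := ℝ) (x := (1:ℝ))).sub h0
      have := (Real.continuousAt_log (by norm_num : (1:ℝ) ≠ 0)).tendsto.comp h2
      simpa [Function.comp_def] using this
    have hden : Tendsto (fun s : ℝ => (Real.log s)⁻¹) atTop (nhds 0) :=
      Real.tendsto_log_atTop.inv_tendsto_atTop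
    simpa [div_eq_mul_inv] using hnum.mul hden
  have key : Tendsto (fun s : ℝ => -c + Real.log (1 - s ^ (c - b)) / Real.log s)
      atTop (nhds (-c)) := by
    simpa using (tendsto_const_nhds (α := ℝ) (x := -c)).add h1
  refine key.congr' ?_
  filter_upwards [eventually_gt_atTop 1] with s hs
  have hs0 : (0:ℝ) < s := lt_trans one_pos hs
  have hlog : Real.log s ≠ 0 := ne_of_gt (Real.log_pos hs)
  have hlt : s ^ (-b) < s ^ (-c) := (Real.rpow_lt_rpow_left_iff hs).mpr (by linarith)
  have hpos : 0 < 1 - s ^ (c - b) := by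
    have : s ^ (c - b) < 1 := Real.rpow_lt_one_of_one_lt_of_neg hs (by linarith)
    linarith
  have habs : |s ^ (-b) - s ^ (-c)| = s ^ (-c) - s ^ (-b) := by
    rw [abs_sub_comm, abs_of_pos (by linarith)]
  have hfac : s ^ (-c) - s ^ (-b) = s ^ (-c) * (1 - s ^ (c - b)) := by
    rw [mul_sub, mul_one, ← Real.rpow_add hs0]
    ring_nf
  rw [habs, hfac, Real.log_mul (by positivity) (ne_of_gt hpos), Real.log_rpow hs0, add_div,
    mul_div_assoc, div_self hlog, mul_one]

/-- For `n ≥ 1` and strictly decreasing reals `a₁ > ⋯ > a_n`, as `s → ∞`,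
`(1/log s)·log(∏_{i<j} |s^{−a_i} − s^{−a_j}|)` converges to `−Σ_j (j−1)·a_j`. -/
theorem log_prod_rpow_diff_tendsto
    (n : ℕ) (hn : 1 ≤ n) (a : Fin n → ℝ) (ha : StrictAnti a) :
    Tendsto (fun s : ℝ =>
        Real.log (∏ p ∈ Finset.univ.filter (fun p : Fin n × Fin n => p.1 < p.2),
          |s ^ (-(a p.1)) - s ^ (-(a p.2))|) / Real.log s)
      atTop (nhds (-∑ j : Fin n, ((j : ℕ) : ℝ) * a j)) := by
  set P := Finset.univ.filter (fun p : Fin n × Fin n => p.1 < p.2) with hP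
  have hsum : Tendsto (fun s : ℝ =>
      ∑ p ∈ P, Real.log |s ^ (-(a p.1)) - s ^ (-(a p.2))| / Real.log s)
      atTop (nhds (∑ p ∈ P, (-(a p.2)))) := by
    apply tendsto_finset_sum
    intro p hp
    exact aux_pair (a p.1) (a p.2) (ha (Finset.mem_filter.mp hp).2)
  have hval : (∑ p ∈ P, (-(a p.2))) = -∑ j : Fin n, ((j : ℕ) : ℝ) * a j := by
    have key : ∑ p ∈ P, a p.2 = ∑ j : Fin n, ((j : ℕ) : ℝ) * a j := by
      rw [Finset.sum_finset_product_right P Finset.univ (fun j => Finset.Iio j)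
        (by intro p; simp [hP, Finset.mem_Iio])]
      refine Finset.sum_congr rfl fun j _ => ?_
      simp [Finset.sum_const, Fin.card_Iio, nsmul_eq_mul]
    rw [← key, Finset.sum_neg_distrib]
  rw [← hval]
  refine hsum.congr' ?_
  filter_upwards [eventually_gt_atTop 1] with s hs
  have hs0 : (0:ℝ) < s := lt_trans one_pos hs
  rw [← Finset.sum_div, ← Real.log_prod]
  intro p hp
  have hlt : s ^ (-(a p.1)) < s ^ (-(a p.2)) :=
    (Real.rpow_lt_rpow_left_iff hs).mpr (by
      have := ha (Finset.mem_filter.mp hp).2; linarith)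
  simp [sub_eq_zero, ne_of_lt hlt]
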